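/- Let x and y be distinct words of length n over {0,…,q−1} such that there exist D, E ⊆ {1,…,n} with |D| = |E| ≤ d and x^{(D)} = y^{(E)}. Then M(x) ≠ M(y), i.e., Δ(x,y) ≠ 0. -/

import Mathlib

/-- Weight sequence: `W p d i` = w_i(q,d) where p = q-1; w_i = 0 for i ≤ 0 (encoded by
ℕ truncated subtraction together with `W p d 0 = 0`), and w_i = 1 + p·∑_{j=1}^d w_{i-j}
for i ≥ 1. -/
def W (p d : ℕ) : ℕ → ℕ
  | 0 => 0
  | (i+1) => 1 + p * ∑ j ∈ Finset.range d, W p d (i - j)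
decreasing_by exact Nat.lt_succ_of_le (Nat.sub_le i j)

/-- Moment of a word (1-indexed): M(x) = ∑_{i=1}^{n} w_i x_i. -/
def moment (w : ℕ → ℕ) (x : List ℕ) : ℕ :=
  ∑ i ∈ Finset.range x.length, w (i + 1) * x.getD i 0

/-- Deleted word x^{(D)}: delete the symbols at the (1-indexed) positions in D,
keeping the remaining symbols in order. -/
def deleteD (x : List ℕ) (D : Finset ℕ) : List ℕ :=
  ((List.range x.length).filter (fun i => (i + 1) ∉ D)).map (fun i => x.getD i 0)

lemma W_zero (p d : ℕ) : W p d 0 = 0 := by rw [W]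

lemma W_succ (p d i : ℕ) :
    W p d (i + 1) = 1 + p * ∑ j ∈ Finset.range d, W p d (i - j) := by rw [W]

lemma W_le_succ (p d : ℕ) : ∀ i, W p d i ≤ W p d (i + 1) := by
  intro i
  induction i using Nat.strong_induction_on with
  | _ i ih =>
    match i with
    | 0 => rw [W_zero]; exact Nat.zero_le _
    | (k+1) =>
      rw [W_succ, W_succ]
      have h : ∀ j ∈ Finset.range d, W p d (k - j) ≤ W p d (k + 1 - j) := by
        intro j _
        rcases le_or_gt j k with h | h
        · have hkj : k + 1 - j = (k - j) + 1 := by omega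
          rw [hkj]; exact ih (k - j) (by omega)
        · have hkj : k - j = 0 := by omega
          rw [hkj, W_zero]; exact Nat.zero_le _
      exact Nat.add_le_add_left (Nat.mul_le_mul_left p (Finset.sum_le_sum h)) 1

lemma W_mono (p d : ℕ) : Monotone (W p d) :=
  monotone_nat_of_le_succ (W_le_succ p d)

lemma sum_lt_W (p d t i : ℕ) (ht : t ≤ d) :
    p * ∑ j ∈ Finset.range t, W p d (i - j) < W p d (i + 1) := by
  rw [W_succ]
  have h : ∑ j ∈ Finset.range t, W p d (i - j) ≤ ∑ j ∈ Finset.range d, W p d (i - j) :=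
    Finset.sum_le_sum_of_subset (Finset.range_subset_range.2 ht)
  have := Nat.mul_le_mul_left p h
  omega

lemma moment_nil (w : ℕ → ℕ) : moment w [] = 0 := by simp [moment]

lemma moment_concat (w : ℕ → ℕ) (l : List ℕ) (a : ℕ) :
    moment w (l ++ [a]) = moment w l + w (l.length + 1) * a := by
  unfold moment
  have hlen : (l ++ [a]).length = l.length + 1 := by simp
  rw [hlen, Finset.sum_range_succ]
  congr 1
  · exact Finset.sum_congr rfl fun i hi =>
      congrArg _ (List.getD_append l [a] 0 i (Finset.mem_range.mp hi))
  · congr 1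
    rw [List.getD_eq_getElem?_getD, List.getElem?_concat_length]
    rfl

lemma moment_cons (w : ℕ → ℕ) (a : ℕ) (l : List ℕ) :
    moment w (a :: l) = w 1 * a + moment (fun i => w (i + 1)) l := by
  unfold moment
  rw [List.length_cons, Finset.sum_range_succ']
  simp [add_comm]

lemma moment_le_moment {w₁ w₂ : ℕ → ℕ} (h : ∀ i, w₁ (i + 1) ≤ w₂ (i + 1)) (x : List ℕ) :
    moment w₁ x ≤ moment w₂ x :=
  Finset.sum_le_sum fun i _ => Nat.mul_le_mul_right _ (h i)

lemma moment_sublist_le : ∀ {z v : List ℕ}, z.Sublist v → ∀ w : ℕ → ℕ, Monotone w →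
    moment w z ≤ moment w v := by
  intro z v h
  induction h with
  | slnil => intro w _; simp [moment]
  | @cons z v a h ih =>
    intro w hw
    have hw' : Monotone (fun i => w (i + 1)) := fun x y hxy => hw (by omega)
    calc moment w z ≤ moment (fun i => w (i + 1)) z :=
          moment_le_moment (w₁ := w) (w₂ := fun i => w (i + 1))
            (fun i => hw (by omega)) z
      _ ≤ moment (fun i => w (i + 1)) v := ih _ hw'
      _ ≤ w 1 * a + moment (fun i => w (i + 1)) v := Nat.le_add_left _ _
      _ = moment w (a :: v) := (moment_cons w a v).symm
  | @cons_cons z v a h ih =>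
    intro w hw
    have hw' : Monotone (fun i => w (i + 1)) := fun x y hxy => hw (by omega)
    rw [moment_cons, moment_cons]
    exact Nat.add_le_add_left (ih _ hw') _

lemma sublist_concat_cases {z l : List ℕ} {a : ℕ} (h : z.Sublist (l ++ [a])) :
    z.Sublist l ∨ ∃ z', z = z' ++ [a] ∧ z'.Sublist l := by
  rcases List.sublist_append_iff.mp h with ⟨z₁, z₂, rfl, h₁, h₂⟩
  rcases List.sublist_singleton.mp h₂ with rfl | rfl
  · left; simpa using h₁
  · right; exact ⟨z₁, rfl, h₁⟩

lemma dropLast_sublist_of_concat {z l : List ℕ} {a : ℕ} (h : z.Sublist (l ++ [a])) :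
    z.dropLast.Sublist l := by
  rcases sublist_concat_cases h with h' | ⟨z', rfl, h'⟩
  · exact (List.dropLast_sublist z).trans h'
  · rwa [List.dropLast_concat]

/-- Key quantitative lemma: if `z` is a common subsequence of `u` and `v`, with at most `d`
deletions needed to get from `u` to `z`, then `M(u) ≤ M(v) + p·∑_{j=0}^{t-1} w_{|u|-j}`
where `t = |u| - |z|`. -/
lemma lemmaB (p d : ℕ) :
    ∀ N, ∀ u v z : List ℕ, u.length + v.length ≤ N → z.Sublist u → z.Sublist v →
    u.length ≤ z.length + d → (∀ a ∈ u, a ≤ p) →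
    moment (W p d) u ≤ moment (W p d) v
      + p * ∑ j ∈ Finset.range (u.length - z.length), W p d (u.length - j) := by
  intro N
  induction N with
  | zero =>
    intro u v z hN _ _ _ _
    have hu : u = [] := List.length_eq_zero_iff.mp (by omega)
    subst hu
    simp [moment_nil]
  | succ N ih =>
    intro u v z hN hzu hzv hud hup
    rcases List.eq_nil_or_concat' u with rfl | ⟨u', a, rfl⟩
    · simp [moment_nil]
    have hlu : (u' ++ [a]).length = u'.length + 1 := by simp
    have hup' : ∀ x ∈ u', x ≤ p := fun x hx => hup x (List.mem_append_left _ hx)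
    have hap : a ≤ p := hup a (by simp)
    rcases sublist_concat_cases hzu with hzu' | ⟨z', rfl, hz'u'⟩
    · -- case (a): z fits inside u', strip the top letter of u
      have hlen : z.length ≤ u'.length := hzu'.length_le
      have hIH := ih u' v z (by simp at hN; omega) hzu' hzv (by omega) hup'
      rw [moment_concat, hlu]
      set t' := u'.length - z.length with hto
      have htu : u'.length + 1 - z.length = t' + 1 := by omega
      rw [htu]
      have hsum : ∑ j ∈ Finset.range (t' + 1), W p d (u'.length + 1 - j)
          = (∑ j ∈ Finset.range t', W p d (u'.length - j)) + W p d (u'.length + 1) := by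
        rw [Finset.sum_range_succ']
        congr 1
        exact Finset.sum_congr rfl fun j _ => by congr 1; omega
      have h2 : W p d (u'.length + 1) * a ≤ p * W p d (u'.length + 1) := by
        rw [mul_comm]; exact Nat.mul_le_mul_right _ hap
      have h3 : p * ∑ j ∈ Finset.range (t' + 1), W p d (u'.length + 1 - j)
          = p * (∑ j ∈ Finset.range t', W p d (u'.length - j))
            + p * W p d (u'.length + 1) := by rw [hsum, Nat.mul_add]
      linarith
    · -- z = z' ++ [a]
      rcases List.eq_nil_or_concat' v with rfl | ⟨v', b, rfl⟩
      · exact absurd (List.sublist_nil.mp hzv) (by simp)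
      have hlv : (v' ++ [b]).length = v'.length + 1 := by simp
      rcases sublist_concat_cases hzv with hzv' | ⟨z₂, heq, hz₂v'⟩
      · -- case (b): z fits inside v', strip the top letter of v
        have hIH := ih (u' ++ [a]) v' (z' ++ [a]) (by simp at hN ⊢; omega) hzu hzv' hud hup
        rw [moment_concat (W p d) v' b]
        linarith [Nat.zero_le (W p d (v'.length + 1) * b)]
      · -- case (c): last letters matched on both sides
        obtain ⟨rfl, hba⟩ : z' = z₂ ∧ ([a] : List ℕ) = [b] :=
          List.append_inj' heq rfl
        have hba' : a = b := by simpa using hba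
        subst hba'
        have hzlen : (z' ++ [a]).length = z'.length + 1 := by simp
        have hIH := ih u' v' z' (by simp at hN; omega) hz'u' hz₂v'
          (by rw [hlu, hzlen] at hud; omega) hup'
        rw [moment_concat, moment_concat, hlu]
        set t' := u'.length - z'.length with hto
        have htz : z'.length ≤ u'.length := hz'u'.length_le
        have htu : u'.length + 1 - (z' ++ [a]).length = t' := by
          rw [hzlen]; omega
        rw [htu]
        -- sum identities
        have hA : ∑ j ∈ Finset.range (t' + 1), W p d (u'.length + 1 - j)
            = (∑ j ∈ Finset.range t', W p d (u'.length - j)) + W p d (u'.length + 1) := by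
          rw [Finset.sum_range_succ']
          congr 1
          exact Finset.sum_congr rfl fun j _ => by congr 1; omega
        have hB : ∑ j ∈ Finset.range (t' + 1), W p d (u'.length + 1 - j)
            = (∑ j ∈ Finset.range t', W p d (u'.length + 1 - j))
              + W p d (u'.length + 1 - t') := Finset.sum_range_succ _ _
        have hm : u'.length + 1 - t' = z'.length + 1 := by omega
        have hmv : W p d (z'.length + 1) ≤ W p d (v'.length + 1) :=
          W_mono p d (by have := hz₂v'.length_le; omega)
        rw [hm] at hB
        -- abbreviations
        set A := ∑ j ∈ Finset.range t', W p d (u'.length - j) with hAdef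
        set B := ∑ j ∈ Finset.range t', W p d (u'.length + 1 - j) with hBdef
        set Wu := W p d (u'.length + 1) with hWu
        set Wv := W p d (v'.length + 1) with hWv
        set Wz := W p d (z'.length + 1) with hWz
        have hkey : A + Wu = B + Wz := by
          rw [hA] at hB
          linarith
        -- goal : moment u' + Wu * a ≤ moment v' + Wv * a + p * B
        have hmu : Wz ≤ Wu := W_mono p d (by omega)
        have hrearr : Wz * p + Wu * a ≤ Wv * a + Wu * p := by
          rcases le_total Wv Wu with hvu | huv
          · have h1 : Wz * p ≤ Wv * p := Nat.mul_le_mul_right _ hmv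
            have h2 : a * Wu + p * Wv ≤ a * Wv + p * Wu :=
              mul_add_mul_le_mul_add_mul hap hvu
            nlinarith
          · have h1 : Wu * a ≤ Wv * a := Nat.mul_le_mul_right _ huv
            have h2 : Wz * p ≤ Wu * p := Nat.mul_le_mul_right _ hmu
            linarith
        have hexp1 : p * A + p * Wu = p * B + p * Wz := by
          rw [← Nat.mul_add, ← Nat.mul_add, hkey]
        have hrearr' : p * Wz + a * Wu ≤ a * Wv + p * Wu := by
          have e1 : Wz * p = p * Wz := Nat.mul_comm _ _
          have e2 : Wu * a = a * Wu := Nat.mul_comm _ _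
          have e3 : Wv * a = a * Wv := Nat.mul_comm _ _
          have e4 : Wu * p = p * Wu := Nat.mul_comm _ _
          linarith [hrearr]
        have goalmul1 : Wu * a = a * Wu := Nat.mul_comm _ _
        have goalmul2 : Wv * a = a * Wv := Nat.mul_comm _ _
        linarith [hIH, hrearr', hexp1]

/-- Strict comparison when the last letters differ. -/
lemma mainLt (p d : ℕ) {u' v' z' : List ℕ} {a b : ℕ}
    (hzu : z'.Sublist u') (hzv : z'.Sublist v') (hlen : u'.length = v'.length)
    (hdelv : v'.length ≤ z'.length + d) (hvp : ∀ x ∈ v', x ≤ p) (hab : b < a) :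
    moment (W p d) (v' ++ [b]) < moment (W p d) (u' ++ [a]) := by
  have hB := lemmaB p d (v'.length + u'.length) v' u' z' le_rfl hzv hzu hdelv hvp
  rw [moment_concat, moment_concat, ← hlen]
  have hz : z'.length ≤ v'.length := hzv.length_le
  have hkey : p * ∑ j ∈ Finset.range (v'.length - z'.length), W p d (v'.length - j)
      < W p d (v'.length + 1) := sum_lt_W p d _ _ (by omega)
  rw [← hlen] at hB hkey
  have hmul : W p d (u'.length + 1) * (b + 1) ≤ W p d (u'.length + 1) * a :=
    Nat.mul_le_mul_left _ hab
  have hms : W p d (u'.length + 1) * (b + 1)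
      = W p d (u'.length + 1) * b + W p d (u'.length + 1) := Nat.mul_succ _ _
  linarith

/-- Main lemma: distinct equal-length words sharing a common subsequence within `d`
deletions have distinct moments. -/
lemma mainNe (p d : ℕ) :
    ∀ N, ∀ u v z : List ℕ, u.length + v.length ≤ N → u.length = v.length →
    z.Sublist u → z.Sublist v → u.length ≤ z.length + d →
    (∀ x ∈ u, x ≤ p) → (∀ x ∈ v, x ≤ p) → u ≠ v →
    moment (W p d) u ≠ moment (W p d) v := by
  intro N
  induction N with
  | zero =>
    intro u v z hN hlen _ _ _ _ _ hne
    have hu : u = [] := List.length_eq_zero_iff.mp (by omega)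
    have hv : v = [] := List.length_eq_zero_iff.mp (by omega)
    exact absurd (hu.trans hv.symm) hne
  | succ N ih =>
    intro u v z hN hlen hzu hzv hzd hup hvp hne
    rcases List.eq_nil_or_concat' u with rfl | ⟨u', a, rfl⟩
    · have hv : v = [] := List.length_eq_zero_iff.mp (by simpa using hlen.symm)
      exact absurd hv.symm hne
    rcases List.eq_nil_or_concat' v with rfl | ⟨v', b, rfl⟩
    · simp at hlen
    have hz'u : z.dropLast.Sublist u' := dropLast_sublist_of_concat hzu
    have hz'v : z.dropLast.Sublist v' := dropLast_sublist_of_concat hzv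
    have hlu : (u' ++ [a]).length = u'.length + 1 := by simp
    have hlv : (v' ++ [b]).length = v'.length + 1 := by simp
    have hlen' : u'.length = v'.length := by rw [hlu, hlv] at hlen; omega
    have hdz : z.dropLast.length = z.length - 1 := List.length_dropLast
    have hzd' : u'.length ≤ z.dropLast.length + d := by rw [hlu] at hzd; omega
    have hup' : ∀ x ∈ u', x ≤ p := fun x hx => hup x (List.mem_append_left _ hx)
    have hvp' : ∀ x ∈ v', x ≤ p := fun x hx => hvp x (List.mem_append_left _ hx)
    rcases Nat.lt_trichotomy a b with h | h | h
    · exact ne_of_lt (mainLt p d hz'v hz'u hlen'.symm hzd' hup' h)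
    · subst h
      have hne' : u' ≠ v' := fun h' => hne (by rw [h'])
      have hIH := ih u' v' z.dropLast (by rw [hlu, hlv] at hN; omega) hlen'
        hz'u hz'v hzd' hup' hvp' hne'
      rw [moment_concat, moment_concat, hlen']
      intro hcon
      exact hIH (by omega)
    · exact (ne_of_lt (mainLt p d hz'u hz'v hlen' (hlen' ▸ hzd') hvp' h)).symm

lemma deleteD_sublist (x : List ℕ) (D : Finset ℕ) : (deleteD x D).Sublist x := by
  have h1 : ((List.range x.length).filter (fun i => decide ((i + 1) ∉ D))).Sublist
      (List.range x.length) := List.filter_sublist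
  have h2 := h1.map (fun i => x.getD i 0)
  have h3 : (List.range x.length).map (fun i => x.getD i 0) = x := by
    apply List.ext_getElem (by simp)
    intro i h h'
    simp only [List.getElem_map, List.getElem_range]
    exact List.getD_eq_getElem x 0 h'
  rw [h3] at h2
  exact h2

lemma deleteD_length (x : List ℕ) (D : Finset ℕ) :
    x.length ≤ (deleteD x D).length + D.card := by
  have hlen : (deleteD x D).length
      = ((List.range x.length).filter (fun i => decide ((i + 1) ∉ D))).length := by
    rw [deleteD, List.length_map]
  have hsplit := (List.range x.length).length_eq_length_filter_add
    (fun i => decide ((i + 1) ∉ D))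
  set l₂ := (List.range x.length).filter (fun i => !decide ((i + 1) ∉ D)) with hl2
  have hnodup : l₂.Nodup := (List.nodup_range).filter _
  have hnodup' : (l₂.map (· + 1)).Nodup := hnodup.map (fun m n h => by omega)
  have hsubset : ∀ m ∈ (l₂.map (· + 1)), m ∈ D := by
    intro m hm
    rcases List.mem_map.mp hm with ⟨i, hi, rfl⟩
    have := (List.mem_filter.mp hi).2
    simpa using this
  have hcard : l₂.length ≤ D.card := by
    have h1 : (l₂.map (· + 1)).toFinset.card = (l₂.map (· + 1)).length :=
      List.toFinset_card_of_nodup hnodup'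
    have h2 : (l₂.map (· + 1)).toFinset ⊆ D := fun m hm =>
      hsubset m (List.mem_toFinset.mp hm)
    have := Finset.card_le_card h2
    rw [h1, List.length_map] at this
    exact this
  rw [List.length_range] at hsplit
  omega

theorem moment_diff_ne_zero (q d n : ℕ) (hq : 2 ≤ q) (hd : 1 ≤ d)
    (x y : List ℕ) (hxlen : x.length = n) (hylen : y.length = n)
    (hx : ∀ a ∈ x, a < q) (hy : ∀ a ∈ y, a < q) (hne : x ≠ y)
    (D E : Finset ℕ) (hD : D ⊆ Finset.Icc 1 n) (hE : E ⊆ Finset.Icc 1 n)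
    (hcard : D.card = E.card) (hd' : D.card ≤ d)
    (hdel : deleteD x D = deleteD y E) :
    moment (W (q - 1) d) x ≠ moment (W (q - 1) d) y := by
  have hzx : (deleteD x D).Sublist x := deleteD_sublist x D
  have hzy : (deleteD x D).Sublist y := by rw [hdel]; exact deleteD_sublist y E
  have hlenb : x.length ≤ (deleteD x D).length + d := by
    have h1 := deleteD_length x D
    omega
  exact mainNe (q - 1) d (x.length + y.length) x y (deleteD x D) le_rfl
    (by omega) hzx hzy hlenb
    (fun s hs => by have := hx s hs; omega) (fun s hs => by have := hy s hs; omega) hne
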